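/- Fix T > 0, σ ∈ ℝ, R ∈ (0,1], and let α(t) = λ e^{-ρ t} + (1-λ) e^{-γ t} with γ > ρ > 0 and λ ∈ (0,1). Then there exists a continuously differentiable function Γ : [0,T] → ℝ satisfying the Volterra differential-integral equation Γ'(t) + σ² Γ(t) - ((1-R)/R) Γ(t)² + ∫_t^T exp(∫_t^s (σ² - 2((1-R)/R) Γ(r)) dr) · α'(s-t) · ((1-R)/R) Γ(s)² ds + exp(∫_t^T (σ² - 2((1-R)/R) Γ(r)) dr) · α'(T-t) = 0 for all t ∈ [0,T], with terminal condition Γ(T) = 1. -/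

import Mathlib

open Real Set

/-- `Γ` (with derivative `Γ'` on `[0,T]`) is a continuously differentiable solution
of the Volterra differential-integral equation
`Γ'(t) + σ² Γ(t) - ((1-R)/R) Γ(t)²
  + ∫_t^T exp(∫_t^s (σ² - 2((1-R)/R) Γ(r)) dr) α'(s-t) ((1-R)/R) Γ(s)² ds
  + exp(∫_t^T (σ² - 2((1-R)/R) Γ(r)) dr) α'(T-t) = 0`, `Γ(T) = 1`. -/
def IsVDIESolution (T σ R : ℝ) (α Γ Γ' : ℝ → ℝ) : Prop :=
  ContinuousOn Γ' (Set.Icc 0 T) ∧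
  (∀ t ∈ Set.Icc (0 : ℝ) T, HasDerivWithinAt Γ (Γ' t) (Set.Icc (0 : ℝ) T) t) ∧
  (∀ t ∈ Set.Icc (0 : ℝ) T,
    Γ' t + σ ^ 2 * Γ t - ((1 - R) / R) * (Γ t) ^ 2
      + (∫ s in t..T,
          Real.exp (∫ r in t..s, (σ ^ 2 - 2 * ((1 - R) / R) * Γ r))
            * deriv α (s - t) * (((1 - R) / R) * (Γ s) ^ 2))
      + Real.exp (∫ r in t..T, (σ ^ 2 - 2 * ((1 - R) / R) * Γ r))
          * deriv α (T - t) = 0) ∧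
  Γ T = 1

lemma vdie_aux_nonneg {T : ℝ} (f f' : ℝ → ℝ)
    (hd : ∀ τ ∈ Icc (0:ℝ) T, HasDerivWithinAt f (f' τ) (Icc 0 T) τ)
    (h0 : 0 ≤ f 0)
    (hstep : ∀ τ ∈ Icc (0:ℝ) T, f τ ≤ 0 → 0 ≤ f' τ) :
    ∀ τ ∈ Icc (0:ℝ) T, 0 ≤ f τ := by
  intro t ht
  by_contra hneg
  push_neg at hneg
  have hcf : ContinuousOn f (Icc 0 T) := fun x hx => (hd x hx).continuousWithinAt
  have ht0 : (0:ℝ) ≤ t := ht.1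
  have htT : t ≤ T := ht.2
  have hsub : Icc (0:ℝ) t ⊆ Icc 0 T := Icc_subset_Icc le_rfl htT
  set S : Set ℝ := Icc 0 t ∩ f ⁻¹' (Ici 0) with hSdef
  have hSclosed : IsClosed S :=
    (hcf.mono hsub).preimage_isClosed_of_isClosed isClosed_Icc isClosed_Ici
  have hSne : S.Nonempty := ⟨0, ⟨le_rfl, ht0⟩, h0⟩
  have hSbdd : BddAbove S := ⟨t, fun x hx => hx.1.2⟩
  set u := sSup S with hu
  have huS : u ∈ S := hSclosed.csSup_mem hSne hSbdd
  have hu0 : 0 ≤ u := huS.1.1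
  have hut : u ≤ t := huS.1.2
  have hfu : 0 ≤ f u := huS.2
  have hunt : u ≠ t := fun h => absurd (h ▸ hfu) (not_le.mpr hneg)
  have hult : u < t := lt_of_le_of_ne hut hunt
  -- on (u, t], f < 0
  have hflt : ∀ x ∈ Ioc u t, f x < 0 := by
    intro x hx
    by_contra hge
    push_neg at hge
    exact absurd (le_csSup hSbdd ⟨⟨hu0.trans hx.1.le, hx.2⟩, hge⟩) (not_le.mpr hx.1)
  -- f is monotone on [u, t]
  have hmono : MonotoneOn f (Icc u t) := by
    apply monotoneOn_of_hasDerivWithinAt_nonneg (convex_Icc u t)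
      (f' := f') (hcf.mono (Icc_subset_Icc hu0 htT))
    · intro x hx
      rw [interior_Icc] at hx
      have hxT : x ∈ Icc (0:ℝ) T := ⟨hu0.trans hx.1.le, hx.2.le.trans htT⟩
      refine (hd x hxT).mono ?_
      rw [interior_Icc]
      exact fun y hy => ⟨hu0.trans hy.1.le, hy.2.le.trans htT⟩
    · intro x hx
      rw [interior_Icc] at hx
      exact hstep x ⟨hu0.trans hx.1.le, hx.2.le.trans htT⟩ (hflt x ⟨hx.1, hx.2.le⟩).le
  have := hmono ⟨le_rfl, hult.le⟩ ⟨hult.le, le_rfl⟩ hult.le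
  linarith [hflt t ⟨hult, le_rfl⟩]

lemma vdie_lip_bound (c K D σμ t0 t1 t2 t3 : ℝ) (hc : 0 ≤ c)
    (h0 : |t0| ≤ σμ * D) (h1 : |t1| ≤ K * D) (h2 : |t2| ≤ K * D) (h3 : |t3| ≤ 2 * (K * D)) :
    |t0 - 2 * c * (t1 + t2) + c * t3| ≤ (σμ + 6 * c * K) * D := by
  have a0 := abs_le.mp h0
  have a1 := abs_le.mp h1
  have a2 := abs_le.mp h2
  have a3 := abs_le.mp h3
  apply abs_le.mpr
  constructor
  · nlinarith [mul_nonneg hc (show (0:ℝ) ≤ K * D - t1 by linarith),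
      mul_nonneg hc (show (0:ℝ) ≤ K * D - t2 by linarith),
      mul_nonneg hc (show (0:ℝ) ≤ 2 * (K * D) + t3 by linarith)]
  · nlinarith [mul_nonneg hc (show (0:ℝ) ≤ K * D + t1 by linarith),
      mul_nonneg hc (show (0:ℝ) ≤ K * D + t2 by linarith),
      mul_nonneg hc (show (0:ℝ) ≤ 2 * (K * D) - t3 by linarith)]

lemma vdie_comp_bound (c K a g σμ : ℝ) (hc : 0 ≤ c) (hK : 0 ≤ K)
    (ha0 : 0 ≤ a) (haK : a ≤ K) (hg0 : 0 ≤ g) (hgK : g ≤ K) :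
    |(σμ - 2 * c * g) * a + c * g ^ 2| ≤ |σμ| * K + 3 * (c * K ^ 2) := by
  apply abs_le.mpr
  constructor
  · nlinarith [le_abs_self σμ, neg_abs_le σμ, abs_nonneg σμ,
      mul_nonneg (mul_nonneg hc hg0) ha0, mul_nonneg hc (sq_nonneg g),
      mul_nonneg hc (show (0:ℝ) ≤ K^2 - g*a by nlinarith),
      mul_nonneg (show (0:ℝ) ≤ σμ + |σμ| by linarith [neg_abs_le σμ]) ha0,
      mul_nonneg (abs_nonneg σμ) (show (0:ℝ) ≤ K - a by linarith)]
  · nlinarith [le_abs_self σμ, abs_nonneg σμ,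
      mul_nonneg (mul_nonneg hc hg0) ha0, mul_nonneg hc (sq_nonneg g),
      mul_nonneg hc (show (0:ℝ) ≤ K^2 - g^2 by nlinarith),
      mul_nonneg (show (0:ℝ) ≤ |σμ| - σμ by linarith [le_abs_self σμ]) ha0,
      mul_nonneg (abs_nonneg σμ) (show (0:ℝ) ≤ K - a by linarith)]

lemma vdie_pr_lip (K x y : ℝ) : |max 0 (min x K) - max 0 (min y K)| ≤ |x - y| := by
  rw [max_comm (0:ℝ) (min x K), max_comm (0:ℝ) (min y K)]
  refine (abs_max_sub_max_le_abs _ _ _).trans ?_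
  exact (abs_min_sub_min_le_max x K y K).trans_eq
    (by rw [sub_self, abs_zero, max_eq_left (abs_nonneg _)])

lemma vdie_ftc {T t μ : ℝ} (htT : t ≤ T) (g q w w' : ℝ → ℝ)
    (hg : Continuous g) (hq : Continuous q) (hw : Continuous w)
    (hwd : ∀ s ∈ Ioo t T, HasDerivAt w (w' s) s)
    (hrel : ∀ s ∈ Ioo t T, g s * w s - μ * w s + w' s = -(q s)) :
    ∫ s in t..T, Real.exp (∫ r in t..s, g r) * Real.exp (-μ * (s - t)) * q s
      = w t - Real.exp (∫ r in t..T, g r) * Real.exp (-μ * (T - t)) * w T := by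
  have hP : ∀ s : ℝ, HasDerivAt (fun u => ∫ r in t..u, g r) (g s) s := fun s =>
    intervalIntegral.integral_hasDerivAt_right (hg.intervalIntegrable _ _)
      (hg.stronglyMeasurable.stronglyMeasurableAtFilter) hg.continuousAt
  set E : ℝ → ℝ := fun s => Real.exp (∫ r in t..s, g r) with hEdef
  have hE : ∀ s : ℝ, HasDerivAt E (E s * g s) s := fun s => (hP s).exp
  have hEcont : Continuous E := by
    have : Differentiable ℝ E := fun s => (hE s).differentiableAt
    exact this.continuous
  have hecont : Continuous fun s : ℝ => Real.exp (-μ * (s - t)) :=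
    Real.continuous_exp.comp (continuous_const.mul (continuous_id.sub continuous_const))
  set φ : ℝ → ℝ := fun s => E s * (Real.exp (-μ * (s - t)) * w s) with hφdef
  have hφcont : Continuous φ := hEcont.mul (hecont.mul hw)
  have hφd : ∀ s ∈ Ioo t T,
      HasDerivAt φ (-(E s * Real.exp (-μ * (s - t)) * q s)) s := by
    intro s hs
    have h2 : HasDerivAt (fun s : ℝ => -μ * (s - t)) (-μ) s := by
      simpa using ((hasDerivAt_id s).sub_const t).const_mul (-μ)
    have h3 := (hE s).mul ((h2.exp).mul (hwd s hs))
    refine h3.congr_deriv (Eq.symm ?_)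
    simp only [Pi.mul_apply]
    linear_combination (-(E s * Real.exp (-μ * (s - t)))) * hrel s hs
  have hint : IntervalIntegrable
      (fun s => -(E s * Real.exp (-μ * (s - t)) * q s)) MeasureTheory.volume t T :=
    (((hEcont.mul hecont).mul hq).neg).intervalIntegrable _ _
  have hftc := intervalIntegral.integral_eq_sub_of_hasDeriv_right_of_le htT
    hφcont.continuousOn (fun x hx => (hφd x hx).hasDerivWithinAt) hint
  rw [intervalIntegral.integral_neg] at hftc
  have hEt : E t = 1 := by simp [hEdef]
  have hφt : φ t = w t := by simp [hφdef, hEt]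
  have hval : (∫ s in t..T, E s * Real.exp (-μ * (s - t)) * q s) = φ t - φ T := by
    linarith
  show (∫ s in t..T, E s * Real.exp (-μ * (s - t)) * q s)
      = w t - E T * Real.exp (-μ * (T - t)) * w T
  rw [hval, hφt, hφdef]
  ring

lemma vdie_key (T σ R ρ γ l : ℝ) (hT : 0 < T) (α : ℝ → ℝ)
    (hα : α = fun t : ℝ => l * Real.exp (-ρ * t) + (1 - l) * Real.exp (-γ * t))
    (A B A' B' : ℝ → ℝ) (hA0 : A 0 = 1) (hB0 : B 0 = 1)
    (hA'c : ContinuousOn A' (Icc 0 T)) (hB'c : ContinuousOn B' (Icc 0 T))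
    (hAd : ∀ τ ∈ Icc (0:ℝ) T, HasDerivWithinAt A (A' τ) (Icc 0 T) τ)
    (hBd : ∀ τ ∈ Icc (0:ℝ) T, HasDerivWithinAt B (B' τ) (Icc 0 T) τ)
    (hAeq : ∀ τ ∈ Icc (0:ℝ) T, A' τ =
      (σ^2 - ρ - 2*((1-R)/R)*(l*A τ + (1-l)*B τ))*(A τ) + ((1-R)/R)*(l*A τ + (1-l)*B τ)^2)
    (hBeq : ∀ τ ∈ Icc (0:ℝ) T, B' τ =
      (σ^2 - γ - 2*((1-R)/R)*(l*A τ + (1-l)*B τ))*(B τ) + ((1-R)/R)*(l*A τ + (1-l)*B τ)^2) :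
    ∃ Γ Γ' : ℝ → ℝ, IsVDIESolution T σ R α Γ Γ' := by
  set θ : ℝ → ℝ := fun x => max 0 (min x T) with hθdef
  have hθmem : ∀ x : ℝ, θ x ∈ Icc (0:ℝ) T := fun x =>
    ⟨le_max_left _ _, max_le hT.le (min_le_right _ _)⟩
  have hθeq : ∀ x ∈ Icc (0:ℝ) T, θ x = x := by
    intro x hx
    show max 0 (min x T) = x
    rw [min_eq_left hx.2, max_eq_right hx.1]
  have hθcont : Continuous θ :=
    continuous_const.max (continuous_id.min continuous_const)
  have hAcont : ContinuousOn A (Icc 0 T) := fun x hx => (hAd x hx).continuousWithinAt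
  have hBcont : ContinuousOn B (Icc 0 T) := fun x hx => (hBd x hx).continuousWithinAt
  set Γ : ℝ → ℝ := fun x => l * A (θ (T - x)) + (1 - l) * B (θ (T - x)) with hΓdef
  set Γ' : ℝ → ℝ := fun x => -(l * A' (θ (T - x)) + (1 - l) * B' (θ (T - x))) with hΓ'def
  have hin : Continuous fun y : ℝ => θ (T - y) :=
    hθcont.comp (continuous_const.sub continuous_id)
  have hinmem : ∀ y : ℝ, θ (T - y) ∈ Icc (0:ℝ) T := fun y => hθmem _
  have hΓcont : Continuous Γ :=
    (continuous_const.mul (hAcont.comp_continuous hin hinmem)).add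
      (continuous_const.mul (hBcont.comp_continuous hin hinmem))
  have hmapT : ∀ x ∈ Icc (0:ℝ) T, T - x ∈ Icc (0:ℝ) T := fun x hx =>
    ⟨by linarith [hx.2], by linarith [hx.1]⟩
  have hθTT : θ (T - T) = 0 := by
    rw [sub_self]; exact hθeq 0 ⟨le_rfl, hT.le⟩
  refine ⟨Γ, Γ', ?_, ?_, ?_, ?_⟩
  · -- continuity of Γ'
    have h1 : ContinuousOn (fun y : ℝ => A' (θ (T - y))) (Icc 0 T) :=
      hA'c.comp hin.continuousOn (fun y _ => hinmem y)
    have h2 : ContinuousOn (fun y : ℝ => B' (θ (T - y))) (Icc 0 T) :=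
      hB'c.comp hin.continuousOn (fun y _ => hinmem y)
    exact ((continuousOn_const.mul h1).add (continuousOn_const.mul h2)).neg
  · -- derivative
    intro t ht
    have hTt : T - t ∈ Icc (0:ℝ) T := hmapT t ht
    have hsub : HasDerivWithinAt (fun x : ℝ => T - x) (-1) (Icc 0 T) t := by
      simpa using (hasDerivWithinAt_id t (Icc (0:ℝ) T)).const_sub T
    have hA1 : HasDerivWithinAt (fun x : ℝ => A (T - x)) (A' (T - t) * (-1)) (Icc 0 T) t :=
      (hAd _ hTt).comp t hsub (fun x hx => hmapT x hx)
    have hB1 : HasDerivWithinAt (fun x : ℝ => B (T - x)) (B' (T - t) * (-1)) (Icc 0 T) t :=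
      (hBd _ hTt).comp t hsub (fun x hx => hmapT x hx)
    have hcomb := (hA1.const_mul l).add (hB1.const_mul (1 - l))
    have hcong : HasDerivWithinAt Γ
        (l * (A' (T - t) * (-1)) + (1 - l) * (B' (T - t) * (-1))) (Icc 0 T) t := by
      refine hcomb.congr (fun y hy => ?_) ?_
      · show l * A (θ (T - y)) + (1 - l) * B (θ (T - y)) = _
        rw [hθeq _ (hmapT y hy)]; rfl
      · show l * A (θ (T - t)) + (1 - l) * B (θ (T - t)) = _
        rw [hθeq _ hTt]; rfl
    have heq : Γ' t = l * (A' (T - t) * (-1)) + (1 - l) * (B' (T - t) * (-1)) := by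
      show -(l * A' (θ (T - t)) + (1 - l) * B' (θ (T - t))) = _
      rw [hθeq _ hTt]; ring
    rw [heq]; exact hcong
  · -- the VDIE equation
    intro t ht
    have ht0 := ht.1
    have htT := ht.2
    have hαd : ∀ x : ℝ, HasDerivAt (fun u : ℝ => l * Real.exp (-ρ * u) + (1 - l) * Real.exp (-γ * u))
        (l * (Real.exp (-ρ * x) * (-ρ)) + (1 - l) * (Real.exp (-γ * x) * (-γ))) x := by
      intro x
      have h1 : HasDerivAt (fun u : ℝ => -ρ * u) (-ρ) x := by
        simpa using (hasDerivAt_id x).const_mul (-ρ)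
      have h2 : HasDerivAt (fun u : ℝ => -γ * u) (-γ) x := by
        simpa using (hasDerivAt_id x).const_mul (-γ)
      exact ((h1.exp).const_mul l).add ((h2.exp).const_mul (1 - l))
    have hder : ∀ x : ℝ, deriv α x
        = l * (Real.exp (-ρ * x) * (-ρ)) + (1 - l) * (Real.exp (-γ * x) * (-γ)) := by
      intro x; rw [hα]; exact (hαd x).deriv
    have hg : Continuous (fun r : ℝ => σ ^ 2 - 2 * ((1 - R) / R) * Γ r) :=
      continuous_const.sub (continuous_const.mul hΓcont)
    have hq : Continuous (fun s : ℝ => (1 - R) / R * Γ s ^ 2) :=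
      continuous_const.mul (hΓcont.pow 2)
    have hwAc : Continuous (fun s : ℝ => A (θ (T - s))) := hAcont.comp_continuous hin hinmem
    have hwBc : Continuous (fun s : ℝ => B (θ (T - s))) := hBcont.comp_continuous hin hinmem
    have hwd : ∀ (W W' : ℝ → ℝ), (∀ τ ∈ Icc (0:ℝ) T, HasDerivWithinAt W (W' τ) (Icc 0 T) τ) →
        ∀ s ∈ Ioo t T, HasDerivAt (fun u : ℝ => W (θ (T - u))) (-(W' (T - s))) s := by
      intro W W' hWd s hs
      have hTs : T - s ∈ Ioo (0:ℝ) T := ⟨by linarith [hs.2], by linarith [hs.1, ht0]⟩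
      have hnhds : Icc (0:ℝ) T ∈ nhds (T - s) := Icc_mem_nhds hTs.1 hTs.2
      have hW2 : HasDerivAt W (W' (T - s)) (T - s) :=
        (hWd _ ⟨hTs.1.le, hTs.2.le⟩).hasDerivAt hnhds
      have hev : (fun u : ℝ => W (θ u)) =ᶠ[nhds (T - s)] W := by
        filter_upwards [Ioo_mem_nhds hTs.1 hTs.2] with u hu
        rw [hθeq u ⟨hu.1.le, hu.2.le⟩]
      have hW3 : HasDerivAt (fun u : ℝ => W (θ u)) (W' (T - s)) (T - s) :=
        hW2.congr_of_eventuallyEq hev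
      have hsubs : HasDerivAt (fun x : ℝ => T - x) (-1) s := by
        simpa using (hasDerivAt_id s).const_sub T
      have hc := hW3.comp s hsubs
      have hval : W' (T - s) * (-1) = -(W' (T - s)) := by ring
      rw [hval] at hc
      exact hc
    have hwAd := hwd A A' hAd
    have hwBd := hwd B B' hBd
    have hrel : ∀ (W W' : ℝ → ℝ) (μ : ℝ),
        (∀ τ ∈ Icc (0:ℝ) T, W' τ =
          (σ^2 - μ - 2*((1-R)/R)*(l*A τ + (1-l)*B τ))*(W τ) + ((1-R)/R)*(l*A τ + (1-l)*B τ)^2) →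
        ∀ s ∈ Ioo t T,
          (σ ^ 2 - 2 * ((1 - R) / R) * Γ s) * (W (θ (T - s))) - μ * (W (θ (T - s)))
            + (-(W' (T - s))) = -((1 - R) / R * Γ s ^ 2) := by
      intro W W' μ hWeq s hs
      have hTs : T - s ∈ Icc (0:ℝ) T := ⟨by linarith [hs.2], by linarith [hs.1, ht0]⟩
      have hΓs : Γ s = l * A (T - s) + (1 - l) * B (T - s) := by
        show l * A (θ (T - s)) + (1 - l) * B (θ (T - s)) = _
        rw [hθeq _ hTs]
      rw [hθeq _ hTs, hΓs]
      linear_combination (-1 : ℝ) * hWeq (T - s) hTs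
    have hIA := vdie_ftc htT (fun r : ℝ => σ ^ 2 - 2 * ((1 - R) / R) * Γ r)
      (fun s : ℝ => (1 - R) / R * Γ s ^ 2) (fun s : ℝ => A (θ (T - s)))
      (fun s : ℝ => -(A' (T - s)))
      hg hq hwAc hwAd (hrel A A' ρ hAeq)
    have hIB := vdie_ftc htT (fun r : ℝ => σ ^ 2 - 2 * ((1 - R) / R) * Γ r)
      (fun s : ℝ => (1 - R) / R * Γ s ^ 2) (fun s : ℝ => B (θ (T - s)))
      (fun s : ℝ => -(B' (T - s)))
      hg hq hwBc hwBd (hrel B B' γ hBeq)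
    beta_reduce at hIA hIB
    have hconts : Continuous fun s : ℝ =>
        Real.exp (∫ r in t..s, (σ ^ 2 - 2 * ((1 - R) / R) * Γ r)) := by
      have hdiff : Differentiable ℝ (fun u : ℝ => ∫ r in t..u, (σ ^ 2 - 2 * ((1 - R) / R) * Γ r)) :=
        fun s => (intervalIntegral.integral_hasDerivAt_right (hg.intervalIntegrable _ _)
          (hg.stronglyMeasurable.stronglyMeasurableAtFilter) hg.continuousAt).differentiableAt
      exact Real.continuous_exp.comp hdiff.continuous
    have heρ : Continuous fun s : ℝ => Real.exp (-ρ * (s - t)) :=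
      Real.continuous_exp.comp (continuous_const.mul (continuous_id.sub continuous_const))
    have heγ : Continuous fun s : ℝ => Real.exp (-γ * (s - t)) :=
      Real.continuous_exp.comp (continuous_const.mul (continuous_id.sub continuous_const))
    have hintρ : IntervalIntegrable (fun s : ℝ =>
        Real.exp (∫ r in t..s, (σ ^ 2 - 2 * ((1 - R) / R) * Γ r)) * Real.exp (-ρ * (s - t))
          * ((1 - R) / R * Γ s ^ 2)) MeasureTheory.volume t T :=
      ((hconts.mul heρ).mul hq).intervalIntegrable _ _
    have hintγ : IntervalIntegrable (fun s : ℝ =>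
        Real.exp (∫ r in t..s, (σ ^ 2 - 2 * ((1 - R) / R) * Γ r)) * Real.exp (-γ * (s - t))
          * ((1 - R) / R * Γ s ^ 2)) MeasureTheory.volume t T :=
      ((hconts.mul heγ).mul hq).intervalIntegrable _ _
    have hIcalc : (∫ s in t..T,
          Real.exp (∫ r in t..s, (σ ^ 2 - 2 * ((1 - R) / R) * Γ r))
            * deriv α (s - t) * (((1 - R) / R) * (Γ s) ^ 2))
        = (-(l * ρ)) * (∫ s in t..T,
            Real.exp (∫ r in t..s, (σ ^ 2 - 2 * ((1 - R) / R) * Γ r)) * Real.exp (-ρ * (s - t))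
              * ((1 - R) / R * Γ s ^ 2))
          + (-((1 - l) * γ)) * (∫ s in t..T,
            Real.exp (∫ r in t..s, (σ ^ 2 - 2 * ((1 - R) / R) * Γ r)) * Real.exp (-γ * (s - t))
              * ((1 - R) / R * Γ s ^ 2)) := by
      rw [← intervalIntegral.integral_const_mul, ← intervalIntegral.integral_const_mul,
        ← intervalIntegral.integral_add (hintρ.const_mul _) (hintγ.const_mul _)]
      apply intervalIntegral.integral_congr
      intro s hs
      simp only
      rw [hder]
      ring
    have hTt : T - t ∈ Icc (0:ℝ) T := hmapT t ht
    have hθt : θ (T - t) = T - t := hθeq _ hTt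
    have hΓt : Γ t = l * A (T - t) + (1 - l) * B (T - t) := by
      show l * A (θ (T - t)) + (1 - l) * B (θ (T - t)) = _
      rw [hθt]
    have hΓ't : Γ' t = -(l * A' (T - t) + (1 - l) * B' (T - t)) := by
      show -(l * A' (θ (T - t)) + (1 - l) * B' (θ (T - t))) = _
      rw [hθt]
    rw [hθt, hθTT] at hIA hIB
    rw [hA0] at hIA
    rw [hB0] at hIB
    rw [hIcalc, hIA, hIB, hΓt, hΓ't, hder]
    linear_combination (-l : ℝ) * hAeq (T - t) hTt + (-(1 - l) : ℝ) * hBeq (T - t) hTt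
  · -- terminal condition
    show l * A (θ (T - T)) + (1 - l) * B (θ (T - T)) = 1
    rw [hθTT, hA0, hB0]; ring

set_option maxHeartbeats 2000000 in
/-- existence of a continuously differentiable solution of the VDIE. -/
theorem vdie_existence
    (T σ R ρ γ l : ℝ) (hT : 0 < T) (hR0 : 0 < R) (hR1 : R ≤ 1)
    (hρ : 0 < ρ) (hργ : ρ < γ) (hl0 : 0 < l) (hl1 : l < 1)
    (α : ℝ → ℝ)
    (hα : α = fun t : ℝ => l * Real.exp (-ρ * t) + (1 - l) * Real.exp (-γ * t)) :
    ∃ Γ Γ' : ℝ → ℝ, IsVDIESolution T σ R α Γ Γ' := by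
  rcases eq_or_lt_of_le hR1 with hR1' | hRlt
  · -- R = 1 : explicit exponential solution
    subst hR1'
    have hc0 : ((1 : ℝ) - 1) / 1 = 0 := by norm_num
    have hdA : ∀ τ : ℝ, HasDerivAt (fun u : ℝ => Real.exp ((σ^2 - ρ) * u))
        ((σ^2 - ρ) * Real.exp ((σ^2 - ρ) * τ)) τ := by
      intro τ
      have h := ((hasDerivAt_id τ).const_mul (σ^2 - ρ)).exp
      convert h using 1
      all_goals simp only [id_eq]
      ring
    have hdB : ∀ τ : ℝ, HasDerivAt (fun u : ℝ => Real.exp ((σ^2 - γ) * u))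
        ((σ^2 - γ) * Real.exp ((σ^2 - γ) * τ)) τ := by
      intro τ
      have h := ((hasDerivAt_id τ).const_mul (σ^2 - γ)).exp
      convert h using 1
      all_goals simp only [id_eq]
      ring
    refine vdie_key T σ 1 ρ γ l hT α hα
      (fun τ => Real.exp ((σ^2 - ρ) * τ)) (fun τ => Real.exp ((σ^2 - γ) * τ))
      (fun τ => (σ^2 - ρ) * Real.exp ((σ^2 - ρ) * τ))
      (fun τ => (σ^2 - γ) * Real.exp ((σ^2 - γ) * τ))
      (by simp) (by simp) ?_ ?_ ?_ ?_ ?_ ?_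
    · exact (continuous_const.mul (Real.continuous_exp.comp
        (continuous_const.mul continuous_id))).continuousOn
    · exact (continuous_const.mul (Real.continuous_exp.comp
        (continuous_const.mul continuous_id))).continuousOn
    · exact fun τ _ => (hdA τ).hasDerivWithinAt
    · exact fun τ _ => (hdB τ).hasDerivWithinAt
    · intro τ _
      rw [hc0]
      ring
    · intro τ _
      rw [hc0]
      ring
  · -- R < 1 : Picard-Lindelöf for the truncated system plus invariance
    have hc : 0 < (1 - R) / R := div_pos (by linarith) hR0
    set c : ℝ := (1 - R) / R with hcdef
    set K : ℝ := max 1 (max (σ^2 / (c * l)) (σ^2 / (c * (1 - l)))) with hKdef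
    have hK1 : (1:ℝ) ≤ K := le_max_left _ _
    have hK0 : (0:ℝ) < K := lt_of_lt_of_le one_pos hK1
    have hKl : σ^2 ≤ c * l * K := by
      have h1 : σ^2 / (c * l) ≤ K := le_trans (le_max_left _ _) (le_max_right _ _)
      have h2 : 0 < c * l := mul_pos hc hl0
      rw [div_le_iff₀ h2] at h1
      nlinarith
    have hKl' : σ^2 ≤ c * (1 - l) * K := by
      have h1 : σ^2 / (c * (1 - l)) ≤ K := le_trans (le_max_right _ _) (le_max_right _ _)
      have h2 : 0 < c * (1 - l) := mul_pos hc (by linarith)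
      rw [div_le_iff₀ h2] at h1
      nlinarith
    set pr : ℝ → ℝ := fun x => max 0 (min x K) with hprdef
    have hpr0' : ∀ x : ℝ, 0 ≤ pr x := fun x => le_max_left _ _
    have hprK' : ∀ x : ℝ, pr x ≤ K := fun x => max_le hK0.le (min_le_right _ _)
    have hprlip : ∀ x y : ℝ, |pr x - pr y| ≤ |x - y| := fun x y => vdie_pr_lip K x y
    have hprid : ∀ x : ℝ, 0 ≤ x → x ≤ K → pr x = x := by
      intro x h0 hK
      show max 0 (min x K) = x
      rw [min_eq_left hK, max_eq_right h0]
    have hprzero : ∀ x : ℝ, x ≤ 0 → pr x = 0 := by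
      intro x h
      show max 0 (min x K) = 0
      rw [min_eq_left (h.trans hK0.le), max_eq_left h]
    have hprtop : ∀ x : ℝ, K ≤ x → pr x = K := by
      intro x h
      show max 0 (min x K) = K
      rw [min_eq_right h, max_eq_right hK0.le]
    have hprcont : Continuous pr := continuous_const.max (continuous_id.min continuous_const)
    set G : ℝ × ℝ → ℝ := fun p => l * pr p.1 + (1 - l) * pr p.2 with hGdef
    have hG0 : ∀ p : ℝ × ℝ, 0 ≤ G p := by
      intro p
      show 0 ≤ l * pr p.1 + (1 - l) * pr p.2
      nlinarith [hpr0' p.1, hpr0' p.2]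
    have hGK : ∀ p : ℝ × ℝ, G p ≤ K := by
      intro p
      show l * pr p.1 + (1 - l) * pr p.2 ≤ K
      nlinarith [hprK' p.1, hprK' p.2, hpr0' p.1, hpr0' p.2]
    have hGcont : Continuous G :=
      (continuous_const.mul (hprcont.comp continuous_fst)).add
        (continuous_const.mul (hprcont.comp continuous_snd))
    have hd1 : ∀ p q : ℝ × ℝ, |pr p.1 - pr q.1| ≤ dist p q := by
      intro p q
      refine (hprlip _ _).trans ?_
      rw [← Real.dist_eq]
      exact (le_max_left _ _).trans_eq (Prod.dist_eq (x := p) (y := q)).symm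
    have hd2 : ∀ p q : ℝ × ℝ, |pr p.2 - pr q.2| ≤ dist p q := by
      intro p q
      refine (hprlip _ _).trans ?_
      rw [← Real.dist_eq]
      exact (le_max_right _ _).trans_eq (Prod.dist_eq (x := p) (y := q)).symm
    have hGlip : ∀ p q : ℝ × ℝ, |G p - G q| ≤ dist p q := by
      intro p q
      have e : G p - G q = l * (pr p.1 - pr q.1) + (1 - l) * (pr p.2 - pr q.2) := by
        show (l * pr p.1 + (1 - l) * pr p.2) - (l * pr q.1 + (1 - l) * pr q.2) = _
        ring
      rw [e]
      refine (abs_add_le _ _).trans ?_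
      rw [abs_mul, abs_mul, abs_of_nonneg hl0.le,
        abs_of_nonneg (show (0:ℝ) ≤ 1 - l by linarith)]
      nlinarith [mul_nonneg hl0.le (sub_nonneg.mpr (hd1 p q)),
        mul_nonneg (show (0:ℝ) ≤ 1 - l by linarith) (sub_nonneg.mpr (hd2 p q))]
    set v : ℝ → ℝ × ℝ → ℝ × ℝ := fun _ p =>
      ((σ^2 - ρ - 2 * c * G p) * pr p.1 + c * G p ^ 2,
       (σ^2 - γ - 2 * c * G p) * pr p.2 + c * G p ^ 2) with hvdef
    set Lr : ℝ := |σ^2 - ρ| + |σ^2 - γ| + 6 * c * K with hLrdef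
    have hLr0 : 0 ≤ Lr := by
      have h6 : 0 < 6 * c * K := by positivity
      have := abs_nonneg (σ^2 - ρ)
      have := abs_nonneg (σ^2 - γ)
      show 0 ≤ |σ^2 - ρ| + |σ^2 - γ| + 6 * c * K
      linarith
    have hcomp : ∀ (μ : ℝ) (p q : ℝ × ℝ) (a a' : ℝ), |a - a'| ≤ dist p q →
        0 ≤ a' → a' ≤ K →
        |((σ^2 - μ - 2*c*G p) * a + c * G p ^ 2) - ((σ^2 - μ - 2*c*G q) * a' + c * G q ^ 2)|
          ≤ (|σ^2 - μ| + 6 * c * K) * dist p q := by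
      intro μ p q a a' hda ha0 haK
      set D := dist p q with hDdef
      have hD0 : (0:ℝ) ≤ D := dist_nonneg
      have e : ((σ^2 - μ - 2*c*G p) * a + c * G p ^ 2) - ((σ^2 - μ - 2*c*G q) * a' + c * G q ^ 2)
          = (σ^2 - μ) * (a - a') - 2*c*((G p * (a - a')) + (a' * (G p - G q)))
            + c*((G p + G q)*(G p - G q)) := by
        ring
      rw [e]
      refine vdie_lip_bound c K D (|σ^2 - μ|) _ _ _ _ hc.le ?_ ?_ ?_ ?_
      · rw [abs_mul]
        exact mul_le_mul_of_nonneg_left hda (abs_nonneg _)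
      · rw [abs_mul, abs_of_nonneg (hG0 p)]
        exact mul_le_mul (hGK p) hda (abs_nonneg _) hK0.le
      · rw [abs_mul, abs_of_nonneg ha0]
        exact mul_le_mul haK (hGlip p q) (abs_nonneg _) hK0.le
      · rw [abs_mul, abs_of_nonneg (add_nonneg (hG0 p) (hG0 q))]
        refine le_trans (mul_le_mul (show G p + G q ≤ 2 * K by
          linarith [hGK p, hGK q]) (hGlip p q) (abs_nonneg _)
          (by linarith)) (le_of_eq (by ring))
    have hdist : ∀ (t : ℝ) (p q : ℝ × ℝ), dist (v t p) (v t q) ≤ Lr * dist p q := by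
      intro t p q
      rw [show v t p = ((σ^2 - ρ - 2 * c * G p) * pr p.1 + c * G p ^ 2,
          (σ^2 - γ - 2 * c * G p) * pr p.2 + c * G p ^ 2) from rfl,
        show v t q = ((σ^2 - ρ - 2 * c * G q) * pr q.1 + c * G q ^ 2,
          (σ^2 - γ - 2 * c * G q) * pr q.2 + c * G q ^ 2) from rfl]
      rw [Prod.dist_eq]
      apply max_le
      · rw [Real.dist_eq]
        refine le_trans (hcomp ρ p q (pr p.1) (pr q.1) (hd1 p q) (hpr0' _) (hprK' _)) ?_
        have h9 := mul_nonneg (abs_nonneg (σ^2 - γ)) (dist_nonneg (x := p) (y := q))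
        show _ ≤ (|σ^2 - ρ| + |σ^2 - γ| + 6 * c * K) * dist p q
        rw [show (|σ^2 - ρ| + |σ^2 - γ| + 6 * c * K) * dist p q
          = (|σ^2 - ρ| + 6 * c * K) * dist p q + |σ^2 - γ| * dist p q from by ring]
        exact le_add_of_nonneg_right h9
      · rw [Real.dist_eq]
        refine le_trans (hcomp γ p q (pr p.2) (pr q.2) (hd2 p q) (hpr0' _) (hprK' _)) ?_
        have h9 := mul_nonneg (abs_nonneg (σ^2 - ρ)) (dist_nonneg (x := p) (y := q))
        show _ ≤ (|σ^2 - ρ| + |σ^2 - γ| + 6 * c * K) * dist p q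
        rw [show (|σ^2 - ρ| + |σ^2 - γ| + 6 * c * K) * dist p q
          = (|σ^2 - γ| + 6 * c * K) * dist p q + |σ^2 - ρ| * dist p q from by ring]
        exact le_add_of_nonneg_right h9
    set C : ℝ := (|σ^2 - ρ| + |σ^2 - γ|) * K + 3 * (c * K^2) with hCdef
    have hC0 : 0 ≤ C := by
      have h3 : 0 < 3 * (c * K^2) := by positivity
      have h4 := abs_nonneg (σ^2 - ρ)
      have h5 := abs_nonneg (σ^2 - γ)
      show 0 ≤ (|σ^2 - ρ| + |σ^2 - γ|) * K + 3 * (c * K^2)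
      nlinarith
    have hnorm : ∀ (t : ℝ) (p : ℝ × ℝ), ‖v t p‖ ≤ C := by
      intro t p
      rw [show v t p = ((σ^2 - ρ - 2 * c * G p) * pr p.1 + c * G p ^ 2,
          (σ^2 - γ - 2 * c * G p) * pr p.2 + c * G p ^ 2) from rfl]
      rw [Prod.norm_def]
      apply max_le
      · rw [Real.norm_eq_abs]
        refine le_trans (vdie_comp_bound c K (pr p.1) (G p) (σ^2 - ρ) hc.le hK0.le
          (hpr0' _) (hprK' _) (hG0 p) (hGK p)) ?_
        have h9 := mul_nonneg (abs_nonneg (σ^2 - γ)) hK0.le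
        show _ ≤ (|σ^2 - ρ| + |σ^2 - γ|) * K + 3 * (c * K^2)
        rw [show (|σ^2 - ρ| + |σ^2 - γ|) * K + 3 * (c * K^2)
          = (|σ^2 - ρ| * K + 3 * (c * K^2)) + |σ^2 - γ| * K from by ring]
        exact le_add_of_nonneg_right h9
      · rw [Real.norm_eq_abs]
        refine le_trans (vdie_comp_bound c K (pr p.2) (G p) (σ^2 - γ) hc.le hK0.le
          (hpr0' _) (hprK' _) (hG0 p) (hGK p)) ?_
        have h9 := mul_nonneg (abs_nonneg (σ^2 - ρ)) hK0.le
        show _ ≤ (|σ^2 - ρ| + |σ^2 - γ|) * K + 3 * (c * K^2)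
        rw [show (|σ^2 - ρ| + |σ^2 - γ|) * K + 3 * (c * K^2)
          = (|σ^2 - γ| * K + 3 * (c * K^2)) + |σ^2 - ρ| * K from by ring]
        exact le_add_of_nonneg_right h9
    have hPL : IsPicardLindelof v (tmin := 0) (tmax := T) ⟨0, le_rfl, hT.le⟩ ((1:ℝ),(1:ℝ))
        (Real.toNNReal (C*T)) 0 (Real.toNNReal C) (Real.toNNReal Lr) := by
      refine ⟨?_, fun x _ => continuousOn_const,
        fun t _ p _ => by rw [Real.coe_toNNReal _ hC0]; exact hnorm t p, ?_⟩
      · intro t _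
        refine (LipschitzWith.of_dist_le_mul ?_).lipschitzOnWith
        intro p q
        rw [Real.coe_toNNReal _ hLr0]
        exact hdist t p q
      · rw [Real.coe_toNNReal _ hC0, Real.coe_toNNReal _ (mul_nonneg hC0 hT.le)]
        simp [max_eq_left hT.le]
    obtain ⟨f, hf0, hfd⟩ := hPL.exists_eq_forall_mem_Icc_hasDerivWithinAt₀
    replace hf0 : f 0 = ((1:ℝ),(1:ℝ)) := hf0
    have hfc : ContinuousOn f (Icc 0 T) := fun x hx => (hfd x hx).continuousWithinAt
    have hAd : ∀ τ ∈ Icc (0:ℝ) T,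
        HasDerivWithinAt (fun u => (f u).1) ((v τ (f τ)).1) (Icc 0 T) τ :=
      fun τ hτ => (ContinuousLinearMap.fst ℝ ℝ ℝ).hasFDerivAt.comp_hasDerivWithinAt τ (hfd τ hτ)
    have hBd : ∀ τ ∈ Icc (0:ℝ) T,
        HasDerivWithinAt (fun u => (f u).2) ((v τ (f τ)).2) (Icc 0 T) τ :=
      fun τ hτ => (ContinuousLinearMap.snd ℝ ℝ ℝ).hasFDerivAt.comp_hasDerivWithinAt τ (hfd τ hτ)
    have hGf : ContinuousOn (fun τ => G (f τ)) (Icc 0 T) := hGcont.comp_continuousOn hfc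
    have hprA : ContinuousOn (fun τ => pr ((f τ).1)) (Icc 0 T) :=
      hprcont.comp_continuousOn (continuous_fst.comp_continuousOn hfc)
    have hprB : ContinuousOn (fun τ => pr ((f τ).2)) (Icc 0 T) :=
      hprcont.comp_continuousOn (continuous_snd.comp_continuousOn hfc)
    have hA'c : ContinuousOn (fun τ => (v τ (f τ)).1) (Icc 0 T) := by
      show ContinuousOn
        (fun τ => (σ^2 - ρ - 2*c*G (f τ)) * pr ((f τ).1) + c * G (f τ)^2) _
      exact ((continuousOn_const.sub (continuousOn_const.mul hGf)).mul hprA).add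
        (continuousOn_const.mul (hGf.pow 2))
    have hB'c : ContinuousOn (fun τ => (v τ (f τ)).2) (Icc 0 T) := by
      show ContinuousOn
        (fun τ => (σ^2 - γ - 2*c*G (f τ)) * pr ((f τ).2) + c * G (f τ)^2) _
      exact ((continuousOn_const.sub (continuousOn_const.mul hGf)).mul hprB).add
        (continuousOn_const.mul (hGf.pow 2))
    have hA0 : (f 0).1 = 1 := by rw [hf0]
    have hB0 : (f 0).2 = 1 := by rw [hf0]
    have hApos : ∀ τ ∈ Icc (0:ℝ) T, 0 ≤ (f τ).1 := by
      refine vdie_aux_nonneg _ (fun τ => (v τ (f τ)).1) hAd (by rw [hA0]; exact zero_le_one) ?_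
      intro τ hτ hneg
      show 0 ≤ (σ^2 - ρ - 2*c*G (f τ)) * pr ((f τ).1) + c * G (f τ)^2
      rw [hprzero _ hneg]
      have h9 := mul_nonneg hc.le (sq_nonneg (G (f τ)))
      linarith
    have hBpos : ∀ τ ∈ Icc (0:ℝ) T, 0 ≤ (f τ).2 := by
      refine vdie_aux_nonneg _ (fun τ => (v τ (f τ)).2) hBd (by rw [hB0]; exact zero_le_one) ?_
      intro τ hτ hneg
      show 0 ≤ (σ^2 - γ - 2*c*G (f τ)) * pr ((f τ).2) + c * G (f τ)^2
      rw [hprzero _ hneg]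
      have h9 := mul_nonneg hc.le (sq_nonneg (G (f τ)))
      linarith
    have hAbd : ∀ τ ∈ Icc (0:ℝ) T, 0 ≤ K - (f τ).1 := by
      refine vdie_aux_nonneg (fun τ => K - (f τ).1) (fun τ => -((v τ (f τ)).1))
        (fun τ hτ => (hAd τ hτ).const_sub K)
        (by show (0:ℝ) ≤ K - (f 0).1; rw [hA0]; linarith) ?_
      intro τ hτ hneg
      have hneg' : K - (f τ).1 ≤ 0 := hneg
      have hKle : K ≤ (f τ).1 := by linarith
      show 0 ≤ -((σ^2 - ρ - 2*c*G (f τ)) * pr ((f τ).1) + c * G (f τ)^2)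
      rw [hprtop _ hKle]
      have hgl : l * K ≤ G (f τ) := by
        show l * K ≤ l * pr ((f τ).1) + (1 - l) * pr ((f τ).2)
        rw [hprtop _ hKle]
        nlinarith [hpr0' ((f τ).2)]
      nlinarith [mul_nonneg (mul_nonneg hc.le (hG0 (f τ))) (sub_nonneg.mpr (hGK (f τ))),
        mul_nonneg (mul_nonneg hc.le (sub_nonneg.mpr hgl)) hK0.le,
        mul_le_mul_of_nonneg_right hKl hK0.le, mul_pos hρ hK0]
    have hBbd : ∀ τ ∈ Icc (0:ℝ) T, 0 ≤ K - (f τ).2 := by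
      refine vdie_aux_nonneg (fun τ => K - (f τ).2) (fun τ => -((v τ (f τ)).2))
        (fun τ hτ => (hBd τ hτ).const_sub K)
        (by show (0:ℝ) ≤ K - (f 0).2; rw [hB0]; linarith) ?_
      intro τ hτ hneg
      have hneg' : K - (f τ).2 ≤ 0 := hneg
      have hKle : K ≤ (f τ).2 := by linarith
      show 0 ≤ -((σ^2 - γ - 2*c*G (f τ)) * pr ((f τ).2) + c * G (f τ)^2)
      rw [hprtop _ hKle]
      have hgl : (1 - l) * K ≤ G (f τ) := by
        show (1 - l) * K ≤ l * pr ((f τ).1) + (1 - l) * pr ((f τ).2)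
        rw [hprtop _ hKle]
        nlinarith [hpr0' ((f τ).1)]
      have hγ0 : 0 < γ := lt_trans hρ hργ
      nlinarith [mul_nonneg (mul_nonneg hc.le (hG0 (f τ))) (sub_nonneg.mpr (hGK (f τ))),
        mul_nonneg (mul_nonneg hc.le (sub_nonneg.mpr hgl)) hK0.le,
        mul_le_mul_of_nonneg_right hKl' hK0.le, mul_pos hγ0 hK0]
    have hprAeq : ∀ τ ∈ Icc (0:ℝ) T, pr ((f τ).1) = (f τ).1 :=
      fun τ hτ => hprid _ (hApos τ hτ) (by linarith [hAbd τ hτ])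
    have hprBeq : ∀ τ ∈ Icc (0:ℝ) T, pr ((f τ).2) = (f τ).2 :=
      fun τ hτ => hprid _ (hBpos τ hτ) (by linarith [hBbd τ hτ])
    have hGeq : ∀ τ ∈ Icc (0:ℝ) T, G (f τ) = l * (f τ).1 + (1 - l) * (f τ).2 := by
      intro τ hτ
      show l * pr ((f τ).1) + (1 - l) * pr ((f τ).2) = _
      rw [hprAeq τ hτ, hprBeq τ hτ]
    have hAeq : ∀ τ ∈ Icc (0:ℝ) T, (v τ (f τ)).1 =
        (σ^2 - ρ - 2*((1-R)/R)*(l*(f τ).1 + (1-l)*(f τ).2))*((f τ).1)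
          + ((1-R)/R)*(l*(f τ).1 + (1-l)*(f τ).2)^2 := by
      intro τ hτ
      show (σ^2 - ρ - 2*c*G (f τ)) * pr ((f τ).1) + c * G (f τ)^2 = _
      rw [hGeq τ hτ, hprAeq τ hτ]
    have hBeq : ∀ τ ∈ Icc (0:ℝ) T, (v τ (f τ)).2 =
        (σ^2 - γ - 2*((1-R)/R)*(l*(f τ).1 + (1-l)*(f τ).2))*((f τ).2)
          + ((1-R)/R)*(l*(f τ).1 + (1-l)*(f τ).2)^2 := by
      intro τ hτ
      show (σ^2 - γ - 2*c*G (f τ)) * pr ((f τ).2) + c * G (f τ)^2 = _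
      rw [hGeq τ hτ, hprBeq τ hτ]
    exact vdie_key T σ R ρ γ l hT α hα (fun τ => (f τ).1) (fun τ => (f τ).2)
      (fun τ => (v τ (f τ)).1) (fun τ => (v τ (f τ)).2) hA0 hB0 hA'c hB'c hAd hBd hAeq hBeq
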